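/- arXiv:2010.03953 — 7 statements merged into one kernel-verified Lean document; each statement's English description precedes it below -/
import Mathlib

section
/- The double integral over the unit square of 1/(1 − x²y²) equals π²/8; that is, ∫₀¹∫₀¹ dx dy/(1 − x²y²) = π²/8, and this integral equals ∑_{k=0}^{∞} 1/(2k+1)². -/
open Real MeasureTheory intervalIntegral

lemma summable_odd_sq' : Summable (fun k : ℕ => (1 : ℝ) / (2 * k + 1) ^ 2) := by
  have h := hasSum_zeta_two.summable
  have h2 := h.comp_injective (i := fun k : ℕ => 2 * k + 1)
    (fun a b hab => by simpa using hab)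
  refine h2.congr fun k => ?_
  simp only [Function.comp]
  push_cast
  ring_nf

lemma tsum_odd_sq' : ∑' k : ℕ, (1 : ℝ) / (2 * k + 1) ^ 2 = π ^ 2 / 8 := by
  have htot : HasSum (fun n : ℕ => (1:ℝ) / (n:ℝ) ^ 2) (π ^ 2 / 6) := hasSum_zeta_two
  have heven : HasSum (fun k : ℕ => (1:ℝ) / ((2 * k : ℕ) : ℝ) ^ 2) (π ^ 2 / 24) := by
    have h := htot.mul_left (1 / 4)
    have h24 : (π ^ 2 / 24 : ℝ) = 1 / 4 * (π ^ 2 / 6) := by ring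
    rw [h24]
    refine h.congr_fun fun k => ?_
    push_cast
    rw [mul_pow, div_mul_eq_mul_div, one_mul, div_div]
    norm_num [mul_comm]
  have hodd : HasSum (fun k : ℕ => (1:ℝ) / ((2 * k + 1 : ℕ) : ℝ) ^ 2)
      (∑' k : ℕ, (1 : ℝ) / (2 * k + 1) ^ 2) := by
    refine summable_odd_sq'.hasSum.congr_fun fun k => by push_cast; ring_nf
  have hsum := HasSum.even_add_odd (f := fun n : ℕ => (1:ℝ)/(n:ℝ)^2) heven hodd
  have heq := hsum.unique htot
  have hval : ∑' k : ℕ, (1 : ℝ) / (2 * k + 1) ^ 2 = π ^ 2 / 6 - π ^ 2 / 24 := by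
    linarith
  rw [hval]; ring

lemma inner_int' {x : ℝ} (hx0 : 0 ≤ x) (hx1 : x < 1) :
    (∫ y in (0:ℝ)..1, 1 / (1 - x ^ 2 * y ^ 2)) = ∑' k : ℕ, (x ^ 2) ^ k / (2 * k + 1) := by
  rw [integral_of_le (by norm_num : (0:ℝ) ≤ 1)]
  have hxy : ∀ y ∈ Set.Ioc (0:ℝ) 1, x ^ 2 * y ^ 2 < 1 := by
    intro y hy
    have hy1 : y ^ 2 ≤ 1 := by nlinarith [hy.1, hy.2]
    nlinarith [sq_nonneg y, sq_nonneg x, pow_lt_one₀ hx0 hx1 (two_ne_zero)]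
  have hcong : ∀ y ∈ Set.Ioc (0:ℝ) 1,
      1 / (1 - x ^ 2 * y ^ 2) = ∑' k : ℕ, (x ^ 2 * y ^ 2) ^ k := by
    intro y hy
    rw [tsum_geometric_of_lt_one (by positivity) (hxy y hy), one_div]
  rw [setIntegral_congr_fun (by measurability) hcong]
  have hint : ∀ k : ℕ, IntegrableOn (fun y : ℝ => (x ^ 2 * y ^ 2) ^ k) (Set.Ioc 0 1) :=
    fun k => (Continuous.integrableOn_Ioc (by continuity))
  have hpow : ∀ k : ℕ, (∫ y in Set.Ioc (0:ℝ) 1, ((x ^ 2) ^ k * y ^ (2 * k))) =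
      (x ^ 2) ^ k / (2 * k + 1) := by
    intro k
    rw [MeasureTheory.integral_const_mul, ← integral_of_le (by norm_num : (0:ℝ) ≤ 1), integral_pow]
    push_cast
    ring
  have hval : ∀ k : ℕ, (∫ y in Set.Ioc (0:ℝ) 1, ‖(x ^ 2 * y ^ 2) ^ k‖) =
      (x ^ 2) ^ k / (2 * k + 1) := by
    intro k
    rw [← hpow k]
    congr 1
    funext y
    rw [Real.norm_eq_abs, abs_of_nonneg (by positivity)]
    ring
  rw [← MeasureTheory.integral_tsum_of_summable_integral_norm hint ?_]
  · refine tsum_congr fun k => ?_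
    rw [← hpow k]
    congr 1; funext y; ring
  · refine Summable.of_nonneg_of_le (fun k => integral_nonneg fun y => norm_nonneg _)
      (fun k => ?_)
      (summable_geometric_of_lt_one (r := x ^ 2) (by positivity) (by nlinarith))
    rw [hval k]
    exact div_le_self (by positivity) (by linarith [Nat.cast_nonneg (α := ℝ) k])

lemma outer_int' :
    (∫ x in (0:ℝ)..1, ∫ y in (0:ℝ)..1, 1 / (1 - x ^ 2 * y ^ 2)) =
      ∑' k : ℕ, (1 : ℝ) / (2 * k + 1) ^ 2 := by
  rw [integral_of_le (by norm_num : (0:ℝ) ≤ 1)]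
  have h1 : ∀ᵐ x : ℝ, x ≠ (1:ℝ) := by
    rw [ae_iff]
    simpa using Real.volume_singleton (a := (1:ℝ))
  have hcong : ∀ᵐ x : ℝ, x ∈ Set.Ioc (0:ℝ) 1 →
      (∫ y in (0:ℝ)..1, 1 / (1 - x ^ 2 * y ^ 2)) =
        ∑' k : ℕ, (x ^ 2) ^ k / (2 * k + 1) := by
    filter_upwards [h1] with x hx hxI
    exact inner_int' hxI.1.le (lt_of_le_of_ne hxI.2 hx)
  rw [setIntegral_congr_ae measurableSet_Ioc hcong]
  have hint : ∀ k : ℕ, IntegrableOn (fun x : ℝ => (x ^ 2) ^ k / (2 * k + 1))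
      (Set.Ioc 0 1) := fun k => (Continuous.integrableOn_Ioc (by continuity))
  have hpow : ∀ k : ℕ, (∫ x in Set.Ioc (0:ℝ) 1, (x ^ 2) ^ k / (2 * k + 1)) =
      (1 : ℝ) / (2 * k + 1) ^ 2 := by
    intro k
    have hx : ∀ x : ℝ, (x ^ 2) ^ k / (2 * k + 1) = (1 / (2 * (k:ℝ) + 1)) * x ^ (2 * k) := by
      intro x; rw [← pow_mul]; ring
    simp_rw [hx]
    rw [MeasureTheory.integral_const_mul, ← integral_of_le (by norm_num : (0:ℝ) ≤ 1), integral_pow]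
    push_cast
    have hk : (2 * (k:ℝ) + 1) ≠ 0 := by positivity
    field_simp
    ring
  have hval : ∀ k : ℕ, (∫ x in Set.Ioc (0:ℝ) 1, ‖(x ^ 2) ^ k / (2 * k + 1)‖) =
      (1 : ℝ) / (2 * k + 1) ^ 2 := by
    intro k
    rw [← hpow k]
    congr 1
    funext x
    rw [Real.norm_eq_abs, abs_of_nonneg (by positivity)]
  rw [← MeasureTheory.integral_tsum_of_summable_integral_norm hint ?_]
  · exact tsum_congr fun k => hpow k
  · refine Summable.of_nonneg_of_le (fun k => integral_nonneg fun x => norm_nonneg _)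
      (fun k => (hval k).le) summable_odd_sq'

/-- The double integral over the unit square of `1 / (1 − x²y²)` equals `π² / 8`,
and it equals the sum `∑_{k=0}^∞ 1 / (2k+1)²`. -/
theorem double_integral_one_sub_sq_mul_sq :
    (∫ x in (0:ℝ)..1, ∫ y in (0:ℝ)..1, 1 / (1 - x ^ 2 * y ^ 2)) = π ^ 2 / 8 ∧
    (∫ x in (0:ℝ)..1, ∫ y in (0:ℝ)..1, 1 / (1 - x ^ 2 * y ^ 2)) =
      ∑' k : ℕ, (1 : ℝ) / (2 * k + 1) ^ 2 := by
  refine ⟨?_, outer_int'⟩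
  rw [outer_int', tsum_odd_sq']
end

section
/- For every positive integer N, the sum ∑_{n=1}^{N} cot²(nπ/(2N+1)) equals N(2N−1)/3. -/
open Real
open Finset

lemma I_pow_odd (t : ℕ) : Complex.I ^ (2 * t + 1) = (-1 : ℂ) ^ t * Complex.I := by
  rw [pow_succ, pow_mul, Complex.I_sq]

lemma I_pow_even (t : ℕ) : Complex.I ^ (2 * t) = (-1 : ℂ) ^ t := by
  rw [pow_mul, Complex.I_sq]

lemma gim_odd (c s : ℝ) (b : ℕ) (a t : ℕ) :
    ((c : ℂ) ^ a * ((s : ℂ) * Complex.I) ^ (2 * t + 1) * (b : ℂ)).im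
      = c ^ a * s ^ (2 * t + 1) * (b : ℝ) * (-1) ^ t := by
  have h1 : (c : ℂ) ^ a * ((s : ℂ) * Complex.I) ^ (2 * t + 1) * (b : ℂ)
      = ((c ^ a * s ^ (2 * t + 1) * b * (-1) ^ t : ℝ) : ℂ) * Complex.I := by
    rw [mul_pow, I_pow_odd]
    push_cast
    ring
  rw [h1, Complex.mul_im, Complex.ofReal_re, Complex.ofReal_im, Complex.I_im, Complex.I_re]
  ring

lemma gim_even (c s : ℝ) (b : ℕ) (a t : ℕ) :
    ((c : ℂ) ^ a * ((s : ℂ) * Complex.I) ^ (2 * t) * (b : ℂ)).im = 0 := by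
  have h1 : (c : ℂ) ^ a * ((s : ℂ) * Complex.I) ^ (2 * t) * (b : ℂ)
      = ((c ^ a * s ^ (2 * t) * b * (-1) ^ t : ℝ) : ℂ) := by
    rw [mul_pow, I_pow_even]
    push_cast
    ring
  rw [h1, Complex.ofReal_im]

lemma sum_range_pair {α : Type*} [AddCommMonoid α] (n : ℕ) (f : ℕ → α) :
    ∑ k ∈ range (2 * n), f k = ∑ j ∈ range n, (f (2 * j) + f (2 * j + 1)) := by
  induction n with
  | zero => simp
  | succ n ih =>
      rw [Finset.sum_range_succ, ← ih, Nat.mul_succ, Finset.sum_range_succ,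
        Finset.sum_range_succ, add_assoc]

lemma demoivre (M : ℕ) (θ : ℝ) :
    Real.sin ((2 * M + 1) * θ) =
      ∑ j ∈ Finset.range (M + 1),
        (-1 : ℝ) ^ j * ((2 * M + 1).choose (2 * j + 1)) *
          Real.cos θ ^ (2 * (M - j)) * Real.sin θ ^ (2 * j + 1) := by
  have key : Real.sin ((2 * M + 1) * θ)
      = ((((Real.cos θ : ℂ)) + (Real.sin θ : ℂ) * Complex.I) ^ (2 * M + 1)).im := by
    rw [Complex.ofReal_cos, Complex.ofReal_sin, Complex.cos_add_sin_mul_I_pow]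
    have h1 : ((2 * M + 1 : ℕ) : ℂ) * (θ : ℂ) = (((2 * M + 1 : ℕ) * θ : ℝ) : ℂ) := by
      push_cast; ring
    rw [h1, ← Complex.ofReal_cos, ← Complex.ofReal_sin]
    simp only [Complex.add_im, Complex.mul_im, Complex.ofReal_im, Complex.ofReal_re,
      Complex.I_im, Complex.I_re]
    ring_nf
    congr 1
    push_cast
    ring
  rw [key, add_pow, Complex.im_sum,
    show 2 * M + 1 + 1 = 2 * (M + 1) by ring, sum_range_pair]
  conv_rhs => rw [← Finset.sum_range_reflect]
  refine Finset.sum_congr rfl ?_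
  intro j hj
  simp only [Finset.mem_range] at hj
  have e1 : 2 * M + 1 - 2 * j = 2 * (M - j) + 1 := by omega
  have e2 : 2 * M + 1 - (2 * j + 1) = 2 * (M - j) := by omega
  have e3 : M + 1 - 1 - j = M - j := by omega
  rw [e1, e2, gim_odd, gim_even, e3, add_zero,
    show (2 * M + 1).choose (2 * j) = (2 * M + 1).choose (2 * (M - j) + 1) by
      rw [← Nat.choose_symm (show 2 * (M - j) + 1 ≤ 2 * M + 1 by omega),
        show 2 * M + 1 - (2 * (M - j) + 1) = 2 * j by omega],
    show M - (M - j) = j by omega]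
  ring

lemma key2 (M : ℕ) (θ : ℝ) (hs : Real.sin θ ≠ 0) :
    Real.sin ((2 * M + 1) * θ) = Real.sin θ ^ (2 * M + 1) *
      ∑ j ∈ Finset.range (M + 1),
        (-1 : ℝ) ^ j * ((2 * M + 1).choose (2 * j + 1)) * (Real.cot θ ^ 2) ^ (M - j) := by
  rw [demoivre, Finset.mul_sum]
  refine Finset.sum_congr rfl ?_
  intro j hj
  simp only [Finset.mem_range] at hj
  rw [Real.cot_eq_cos_div_sin, ← pow_mul, div_pow,
    show 2 * M + 1 = 2 * (M - j) + (2 * j + 1) by omega, pow_add]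
  field_simp
  ring

lemma choose_three (N : ℕ) (hN : 0 < N) :
    (2 * N + 1).choose 3 * 6 = (2 * N + 1) * (2 * N) * (2 * N - 1) := by
  have h1 := Nat.add_one_mul_choose_eq (2 * N) 2
  have h2 := Nat.add_one_mul_choose_eq (2 * N - 1) 1
  rw [Nat.choose_one_right] at h2
  have e : 2 * N - 1 + 1 = 2 * N := by omega
  rw [e] at h2
  -- h2 : 2 * N * (2 * N - 1) = (2 * N).choose 2 * 2
  -- h1 : (2 * N).succ * (2 * N).choose 2 = (2 * N + 1).choose 3 * 3
  norm_num at h1 h2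
  calc (2 * N + 1).choose 3 * 6 = ((2 * N + 1).choose 3 * 3) * 2 := by ring
    _ = ((2 * N + 1) * (2 * N).choose 2) * 2 := by rw [h1]
    _ = (2 * N + 1) * ((2 * N).choose 2 * 2) := by ring
    _ = (2 * N + 1) * (2 * N * (2 * N - 1)) := by rw [h2]
    _ = (2 * N + 1) * (2 * N) * (2 * N - 1) := by ring

/-- For every positive integer `N`,
`∑_{n=1}^{N} cot²(nπ/(2N+1)) = N(2N−1)/3`. -/
theorem sum_cot_sq (N : ℕ) (hN : 0 < N) :
    ∑ n ∈ Finset.Icc 1 N, Real.cot (n * π / (2 * N + 1)) ^ 2 =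
      (N : ℝ) * (2 * N - 1) / 3 := by
  classical
  have hπ : 0 < π := Real.pi_pos
  have hm0 : (0 : ℝ) < 2 * N + 1 := by positivity
  set f : ℕ → ℝ := fun n => Real.cot (n * π / (2 * N + 1)) ^ 2 with hf
  set P : Polynomial ℝ :=
    ∑ j ∈ Finset.range (N + 1),
      Polynomial.C ((-1 : ℝ) ^ j * ((2 * N + 1).choose (2 * j + 1))) *
        Polynomial.X ^ (N - j) with hP
  have hcN : P.coeff N = 2 * N + 1 := by
    rw [hP, Polynomial.finset_sum_coeff, Finset.sum_eq_single 0]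
    · rw [Polynomial.coeff_C_mul, Polynomial.coeff_X_pow, Nat.sub_zero, if_pos rfl,
        mul_one, pow_zero, one_mul, Nat.choose_one_right]
      push_cast
      ring
    · intro j hj hj0
      simp only [Finset.mem_range] at hj
      rw [Polynomial.coeff_C_mul, Polynomial.coeff_X_pow, if_neg (by omega), mul_zero]
    · intro h
      exact absurd (Finset.mem_range.2 (by omega)) h
  have hcN1 : P.coeff (N - 1) = -((2 * N + 1).choose 3 : ℝ) := by
    rw [hP, Polynomial.finset_sum_coeff, Finset.sum_eq_single 1]
    · rw [Polynomial.coeff_C_mul, Polynomial.coeff_X_pow, if_pos rfl, mul_one]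
      norm_num
    · intro j hj hj1
      simp only [Finset.mem_range] at hj
      rw [Polynomial.coeff_C_mul, Polynomial.coeff_X_pow, if_neg (by omega), mul_zero]
    · intro h
      exact absurd (Finset.mem_range.2 (by omega)) h
  have hPne : P ≠ 0 := by
    intro h
    rw [h, Polynomial.coeff_zero] at hcN
    have : (0:ℝ) < 2 * N + 1 := hm0
    linarith
  have hdegle : P.natDegree ≤ N := by
    rw [hP]
    apply Polynomial.natDegree_sum_le_of_forall_le
    intro j hj
    refine le_trans (Polynomial.natDegree_C_mul_le _ _) ?_
    rw [Polynomial.natDegree_X_pow]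
    omega
  have hdeg : P.natDegree = N :=
    le_antisymm hdegle (Polynomial.le_natDegree_of_ne_zero (by rw [hcN]; positivity))
  have hlead : P.leadingCoeff = 2 * N + 1 := by
    rw [Polynomial.leadingCoeff, hdeg, hcN]
  -- each f n is a root
  have hroot : ∀ n ∈ Finset.Icc 1 N, P.eval (f n) = 0 := by
    intro n hn
    simp only [Finset.mem_Icc] at hn
    have hn1 : (0:ℝ) < (n:ℝ) := by exact_mod_cast hn.1
    have hnN : (n:ℝ) ≤ N := by exact_mod_cast hn.2
    have h1 : 0 < (n:ℝ) * π / (2 * N + 1) := by positivity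
    have h2 : (n:ℝ) * π / (2 * N + 1) < π := by
      rw [div_lt_iff₀ hm0]; nlinarith
    have hs : Real.sin ((n:ℝ) * π / (2 * N + 1)) ≠ 0 :=
      ne_of_gt (Real.sin_pos_of_pos_of_lt_pi h1 h2)
    have hk := key2 N ((n:ℝ) * π / (2 * N + 1)) hs
    rw [show (2 * (N:ℝ) + 1) * ((n:ℝ) * π / (2 * N + 1)) = n * π by field_simp,
      Real.sin_nat_mul_pi] at hk
    have hS : ∑ j ∈ Finset.range (N + 1),
        (-1 : ℝ) ^ j * ((2 * N + 1).choose (2 * j + 1)) *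
          (Real.cot ((n:ℝ) * π / (2 * N + 1)) ^ 2) ^ (N - j) = 0 := by
      rcases mul_eq_zero.1 hk.symm with h | h
      · exact absurd h (pow_ne_zero _ hs)
      · exact h
    rw [hP, Polynomial.eval_finset_sum]
    simp only [Polynomial.eval_mul, Polynomial.eval_C, Polynomial.eval_pow, Polynomial.eval_X]
    exact hS
  -- injectivity
  have hinj : ∀ a ∈ Finset.Icc 1 N, ∀ b ∈ Finset.Icc 1 N, f a = f b → a = b := by
    intro a ha b hb hab
    simp only [Finset.mem_Icc] at ha hb
    have bound : ∀ k : ℕ, 1 ≤ k → k ≤ N →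
        0 < (k:ℝ) * π / (2 * N + 1) ∧ (k:ℝ) * π / (2 * N + 1) < π / 2 := by
      intro k h1 h2
      have hk1 : (0:ℝ) < (k:ℝ) := by exact_mod_cast h1
      have hkN : (k:ℝ) ≤ N := by exact_mod_cast h2
      constructor
      · positivity
      · rw [div_lt_iff₀ hm0]; nlinarith
    obtain ⟨ha1, ha2⟩ := bound a ha.1 ha.2
    obtain ⟨hb1, hb2⟩ := bound b hb.1 hb.2
    have hcot : ∀ x : ℝ, Real.cot x = (Real.tan x)⁻¹ := by
      intro x
      rw [Real.cot_eq_cos_div_sin, Real.tan_eq_sin_div_cos, inv_div]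
    have hta : 0 < Real.tan ((a:ℝ) * π / (2 * N + 1)) :=
      Real.tan_pos_of_pos_of_lt_pi_div_two ha1 ha2
    have htb : 0 < Real.tan ((b:ℝ) * π / (2 * N + 1)) :=
      Real.tan_pos_of_pos_of_lt_pi_div_two hb1 hb2
    simp only [hf, hcot] at hab
    field_simp at hab
    have htan : Real.tan ((a:ℝ) * π / (2 * N + 1)) = Real.tan ((b:ℝ) * π / (2 * N + 1)) := by
      have hb' : Real.tan (π * (b:ℝ) / (2 * N + 1)) = Real.tan ((b:ℝ) * π / (2 * N + 1)) := by
        congr 1; ring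
      rw [hb', eq_div_iff (by positivity), one_mul] at hab
      nlinarith [hab, hta, htb]
    have hθ : (a:ℝ) * π / (2 * N + 1) = (b:ℝ) * π / (2 * N + 1) :=
      Real.injOn_tan ⟨by linarith, ha2⟩ ⟨by linarith, hb2⟩ htan
    field_simp at hθ
    exact_mod_cast hθ
  -- the multiset of roots
  set T : Multiset ℝ := (Finset.Icc 1 N).val.map f with hT
  have hT_nodup : T.Nodup :=
    Multiset.Nodup.map_on
      (fun x hx y hy h => hinj x (Finset.mem_def.2 hx) y (Finset.mem_def.2 hy) h)
      (Finset.Icc 1 N).nodup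
  have hTcard : Multiset.card T = N := by
    rw [hT, Multiset.card_map]
    simp [Nat.card_Icc]
  have hTle : T ≤ P.roots := by
    rw [Multiset.le_iff_count]
    intro x
    by_cases hx : x ∈ T
    · rw [Multiset.count_eq_one_of_mem hT_nodup hx]
      refine Multiset.one_le_count_iff_mem.2 ?_
      rcases Multiset.mem_map.1 hx with ⟨n, hn, rfl⟩
      rw [Polynomial.mem_roots hPne]
      exact hroot n (Finset.mem_def.2 hn)
    · rw [Multiset.count_eq_zero_of_notMem hx]
      exact Nat.zero_le _
  have hTeq : T = P.roots :=
    Multiset.eq_of_le_of_card_le hTle (by rw [hTcard]; exact hdeg ▸ P.card_roots')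
  -- monic normalization
  have hmne : (2 * (N:ℝ) + 1) ≠ 0 := ne_of_gt hm0
  set Q : Polynomial ℝ := Polynomial.C ((2 * (N:ℝ) + 1)⁻¹) * P with hQ
  have hQmonic : Q.Monic := by
    show Q.leadingCoeff = 1
    rw [hQ, Polynomial.leadingCoeff_mul, Polynomial.leadingCoeff_C, hlead]
    field_simp
  have hQdeg : Q.natDegree = N := by
    rw [hQ, Polynomial.natDegree_C_mul (inv_ne_zero hmne), hdeg]
  have hQroots : Q.roots = P.roots := Polynomial.roots_C_mul P (inv_ne_zero hmne)
  have hQsplits : Q.Splits :=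
    Polynomial.splits_iff_card_roots.2 (by rw [hQroots, ← hTeq, hTcard, hQdeg])
  have hsum := hQsplits.nextCoeff_eq_neg_sum_roots_of_monic hQmonic
  have hnext : Q.nextCoeff = -(((2 * N + 1).choose 3 : ℝ) / (2 * N + 1)) := by
    rw [Polynomial.nextCoeff_of_natDegree_pos (by rw [hQdeg]; omega), hQdeg, hQ,
      Polynomial.coeff_C_mul, hcN1]
    field_simp
  -- put it together
  have hchoose : ((2 * N + 1).choose 3 : ℝ) * 6 = (2 * N + 1) * (2 * N) * (2 * N - 1) := by
    have := choose_three N hN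
    have h2 := congrArg (fun k : ℕ => (k : ℝ)) this
    push_cast [Nat.cast_sub (by omega : 1 ≤ 2 * N)] at h2
    push_cast
    linarith
  have hfin : ∑ n ∈ Finset.Icc 1 N, f n = ((2 * N + 1).choose 3 : ℝ) / (2 * N + 1) := by
    have h1 : ∑ n ∈ Finset.Icc 1 N, f n = T.sum := rfl
    rw [h1, hTeq, ← hQroots]
    rw [← neg_neg (Q.roots.sum), ← hsum, hnext, neg_neg]
  rw [hf] at hfin
  rw [hfin, div_eq_div_iff hmne (by norm_num : (3:ℝ) ≠ 0)]
  nlinarith [hchoose]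
end

section
/- For every nonnegative integer m and every real x, sin((2m+1)x) = (2m+1) · sin x · ∏_{j=1}^{m} (1 − sin²x / sin²(jπ/(2m+1))). -/
open Real Finset

lemma root_prod (n : ℕ) (hn : 0 < n) (w : ℂ) :
    ∏ k ∈ Finset.range n, (w - Complex.exp (2 * π * Complex.I / n) ^ k) = w ^ n - 1 := by
  have hζ : IsPrimitiveRoot (Complex.exp (2 * π * Complex.I / n)) n :=
    Complex.isPrimitiveRoot_exp n hn.ne'
  set ζ := Complex.exp (2 * π * Complex.I / n)
  have h := Polynomial.X_pow_sub_one_eq_prod hn hζ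
  have h2 := congrArg (Polynomial.eval w) h
  simp only [Polynomial.eval_sub, Polynomial.eval_pow, Polynomial.eval_X, Polynomial.eval_one,
    Polynomial.eval_prod, Polynomial.eval_C] at h2
  rw [h2]
  have himg : Polynomial.nthRootsFinset n (1 : ℂ) = (Finset.range n).image (ζ ^ ·) := by
    have := hζ.nthRoots_eq (one_pow n)
    classical
    rw [Polynomial.nthRootsFinset, this]
    simp [Finset.image, Multiset.toFinset]
  rw [himg, Finset.prod_image]
  intro i hi j hj hij
  exact hζ.pow_inj (Finset.mem_range.mp hi) (Finset.mem_range.mp hj) hij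

lemma csin_prod (m : ℕ) (x : ℂ) :
    Complex.sin ((2 * m + 1) * x) =
      2 ^ (2 * m) * ∏ k ∈ Finset.range (2 * m + 1), Complex.sin (x + k * π / (2 * m + 1)) := by
  set n : ℕ := 2 * m + 1 with hn
  have hn0 : 0 < n := Nat.succ_pos _
  have hnC : (n : ℂ) ≠ 0 := Nat.cast_ne_zero.mpr hn0.ne'
  set ζ : ℂ := Complex.exp (2 * π * Complex.I / n) with hζdef
  set z : ℂ := Complex.exp (2 * x * Complex.I) with hzdef
  have hz0 : z ≠ 0 := Complex.exp_ne_zero _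
  have hsin : ∀ t : ℂ, Complex.exp (t * Complex.I) - Complex.exp (-t * Complex.I)
      = 2 * Complex.I * Complex.sin t := by
    intro t
    rw [Complex.sin]
    field_simp
    ring_nf
    simp [Complex.I_sq]
    ring
  have hexp : ∀ k : ℕ, Complex.exp (2 * (x + k * π / n) * Complex.I) = z * ζ ^ k := by
    intro k
    rw [hzdef, hζdef, ← Complex.exp_nat_mul, ← Complex.exp_add]
    congr 1
    field_simp
  have hneg1 : ((-1 : ℂ)) ^ n = -1 := by
    rw [hn, pow_succ, pow_mul]
    norm_num
  have hprod1 : ∏ k ∈ Finset.range n, (z * ζ ^ k - 1) = z ^ n - 1 := by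
    have h1 : ∀ k ∈ Finset.range n, z * ζ ^ k - 1 = z * (-1 * (z⁻¹ - ζ ^ k)) := by
      intro k _
      field_simp
      ring
    rw [Finset.prod_congr rfl h1, Finset.prod_mul_distrib, Finset.prod_mul_distrib,
      Finset.prod_const, Finset.prod_const, Finset.card_range, root_prod n hn0 z⁻¹,
      hneg1, inv_pow]
    field_simp
    ring
  have hs : (∑ k ∈ Finset.range n, (k : ℂ)) = m * n := by
    have h2 : (∑ i ∈ Finset.range n, i) * 2 = n * (n - 1) := Finset.sum_range_id_mul_two n
    have h3 : (∑ i ∈ Finset.range n, i) = m * n :=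
      Nat.eq_of_mul_eq_mul_right (by norm_num)
        (h2.trans (by rw [hn, Nat.add_sub_cancel]; ring))
    rw [← Nat.cast_sum, h3]
    push_cast
    ring
  have hmain : ∏ k ∈ Finset.range n, (2 * Complex.I * Complex.sin (x + k * π / n))
      = (-1) ^ m * (2 * Complex.I * Complex.sin (n * x)) := by
    have hfac : ∀ k ∈ Finset.range n, 2 * Complex.I * Complex.sin (x + k * π / n)
        = Complex.exp (-(x + k * π / n) * Complex.I) * (z * ζ ^ k - 1) := by
      intro k _
      rw [← hsin, ← hexp k, mul_sub, ← Complex.exp_add, mul_one]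
      congr 2
      ring
    have hsum : ∑ k ∈ Finset.range n, (-(x + k * π / n) * Complex.I)
        = -(n * x + m * π) * Complex.I := by
      have e1 : ∀ k ∈ Finset.range n, (-(x + (k:ℂ) * π / n) * Complex.I)
          = (k : ℂ) * (-(π / n) * Complex.I) + (-x * Complex.I) := by
        intro k _; ring
      rw [Finset.sum_congr rfl e1, Finset.sum_add_distrib, ← Finset.sum_mul,
        Finset.sum_const, Finset.card_range, nsmul_eq_mul, hs]
      field_simp
      ring
    have hznx : z ^ n = Complex.exp (2 * n * x * Complex.I) := by
      rw [hzdef, ← Complex.exp_nat_mul]; ring_nf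
    have hexpm : Complex.exp (-(↑n * x + ↑m * ↑π) * Complex.I)
        = (-1) ^ m * Complex.exp (-(n * x) * Complex.I) := by
      rw [show (-(↑n * x + ↑m * ↑π) * Complex.I) = (-(↑n*x)*Complex.I) + (m:ℕ) * (-(↑π * Complex.I)) by push_cast; ring,
        Complex.exp_add, Complex.exp_nat_mul, mul_comm]
      congr 1
      rw [Complex.exp_neg, Complex.exp_pi_mul_I]
      norm_num
    have hfin : Complex.exp (-(↑n * x) * Complex.I) * (z ^ n - 1)
        = Complex.exp ((↑n * x) * Complex.I) - Complex.exp (-(↑n * x) * Complex.I) := by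
      rw [mul_sub, mul_one, hznx, ← Complex.exp_add]
      congr 2
      ring
    rw [Finset.prod_congr rfl hfac, Finset.prod_mul_distrib, hprod1, ← Complex.exp_sum,
      hsum, hexpm, mul_assoc, hfin, hsin]
  have hlhs : ∏ k ∈ Finset.range n, (2 * Complex.I * Complex.sin (x + k * π / n))
      = (-1) ^ m * (2 * Complex.I) * (2 ^ (2*m) * ∏ k ∈ Finset.range n, Complex.sin (x + k * π / n)) := by
    rw [Finset.prod_mul_distrib, Finset.prod_const, Finset.card_range, hn]
    rw [mul_pow, show (Complex.I) ^ (2*m+1) = (-1)^m * Complex.I by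
      rw [pow_succ, pow_mul, Complex.I_sq]]
    ring
  rw [hlhs] at hmain
  have hne : ((-1 : ℂ)) ^ m * (2 * Complex.I) ≠ 0 := by
    apply mul_ne_zero
    · exact pow_ne_zero _ (by norm_num)
    · simp [Complex.I_ne_zero]
  have h3 := mul_left_cancel₀ hne (hmain.trans
    (by ring : ((-1:ℂ))^m * (2 * Complex.I * Complex.sin (n * x))
        = ((-1:ℂ))^m * (2 * Complex.I) * Complex.sin (n * x)))
  rw [show ((2:ℂ) * m + 1) = (n : ℂ) by push_cast [hn]; ring]
  exact h3.symm

lemma prod_split (m : ℕ) (f : ℕ → ℝ) :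
    ∏ k ∈ Finset.range (2*m+1), f k = f 0 * ∏ j ∈ Finset.Icc 1 m, (f j * f (2*m+1-j)) := by
  rw [Finset.prod_range_succ', show 2*m = m+m from (two_mul m), Finset.prod_range_add]
  have h2 : ∏ i ∈ Finset.range m, f (m + i + 1) = ∏ j ∈ Finset.range m, f (2*m+1 - (j+1)) := by
    rw [← Finset.prod_range_reflect]
    apply Finset.prod_congr rfl
    intro j hj
    have := Finset.mem_range.mp hj
    congr 1
    omega
  rw [h2, ← Finset.prod_mul_distrib, ← Finset.Ico_add_one_right_eq_Icc, Finset.prod_Ico_eq_prod_range]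
  simp only [Nat.add_sub_cancel, Nat.succ_sub_one]
  rw [mul_comm]
  congr 1
  apply Finset.prod_congr rfl
  intro i _
  rw [add_comm 1 i, two_mul m]

lemma sin_sq_sub (a b : ℝ) :
    Real.sin (a + b) * Real.sin (a - b) = Real.sin a ^ 2 - Real.sin b ^ 2 := by
  rw [Real.sin_add, Real.sin_sub]
  nlinarith [Real.sin_sq_add_cos_sq a, Real.sin_sq_add_cos_sq b]

lemma rsin_prod (m : ℕ) (x : ℝ) :
    Real.sin ((2 * m + 1) * x) =
      2 ^ (2 * m) * ∏ k ∈ Finset.range (2 * m + 1), Real.sin (x + k * π / (2 * m + 1)) := by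
  have h := csin_prod m (x : ℂ)
  have h2 : ((Real.sin ((2 * m + 1) * x) : ℝ) : ℂ)
      = ((2 ^ (2 * m) * ∏ k ∈ Finset.range (2 * m + 1),
          Real.sin (x + k * π / (2 * m + 1)) : ℝ) : ℂ) := by
    push_cast [Complex.ofReal_sin]
    exact h
  exact_mod_cast h2

lemma sin_split (m : ℕ) (x : ℝ) :
    Real.sin ((2 * m + 1) * x) =
      2 ^ (2 * m) * (Real.sin x *
        ∏ j ∈ Finset.Icc 1 m,
          (Real.sin (j * π / (2 * m + 1)) ^ 2 - Real.sin x ^ 2)) := by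
  rw [rsin_prod m x, prod_split m (fun k => Real.sin (x + k * π / (2 * m + 1)))]
  simp only [Nat.cast_zero, zero_mul, zero_div, add_zero]
  congr 1
  congr 1
  apply Finset.prod_congr rfl
  intro j hj
  obtain ⟨hj1, hj2⟩ := Finset.mem_Icc.mp hj
  have hn0 : (2 * (m:ℝ) + 1) ≠ 0 := by positivity
  have hcast : ((2*m+1-j : ℕ) : ℝ) = 2*(m:ℝ)+1 - j := by
    push_cast [Nat.cast_sub (by omega : j ≤ 2*m+1)]
    ring
  rw [hcast]
  have h1 : x + (2*(m:ℝ)+1 - j) * π / (2*(m:ℝ)+1) = (x - j * π / (2*(m:ℝ)+1)) + π := by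
    field_simp
    ring
  rw [h1, Real.sin_add_pi, mul_neg, sin_sq_sub x ((j:ℝ) * π / (2*(m:ℝ)+1))]
  ring

lemma const_eq (m : ℕ) :
    (2:ℝ) ^ (2*m) * ∏ j ∈ Finset.Icc 1 m, Real.sin (j * π / (2*(m:ℝ)+1)) ^ 2
      = 2*(m:ℝ)+1 := by
  set P : ℝ → ℝ :=
    fun x => ∏ j ∈ Finset.Icc 1 m, (Real.sin (j*π/(2*(m:ℝ)+1))^2 - Real.sin x^2) with hP
  have hPcont : Continuous P := by
    apply continuous_finset_prod
    intro j _
    fun_prop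
  have hf : HasDerivAt (fun x : ℝ => Real.sin ((2*(m:ℝ)+1) * x)) (2*(m:ℝ)+1) 0 := by
    have h1 := (Real.hasDerivAt_sin ((2*(m:ℝ)+1) * 0)).comp 0
      ((hasDerivAt_id 0).const_mul (2*(m:ℝ)+1))
    simp at h1; exact h1
  have hts : Filter.Tendsto (fun x : ℝ => Real.sin ((2*(m:ℝ)+1)*x) / x)
      (nhdsWithin 0 {(0:ℝ)}ᶜ) (nhds (2*(m:ℝ)+1)) := by
    have h2 := hasDerivAt_iff_tendsto_slope.mp hf
    apply h2.congr
    intro y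
    simp [slope_def_field]
  have hts1 : Filter.Tendsto (fun x : ℝ => Real.sin x / x)
      (nhdsWithin 0 {(0:ℝ)}ᶜ) (nhds 1) := by
    have h2 := hasDerivAt_iff_tendsto_slope.mp (Real.hasDerivAt_sin 0)
    rw [Real.cos_zero] at h2
    apply h2.congr
    intro y
    simp [slope_def_field]
  have htsP : Filter.Tendsto P (nhdsWithin 0 {(0:ℝ)}ᶜ) (nhds (P 0)) :=
    (hPcont.tendsto 0).mono_left nhdsWithin_le_nhds
  have t2 : Filter.Tendsto (fun x : ℝ => (2:ℝ)^(2*m) * (Real.sin x / x * P x))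
      (nhdsWithin 0 {(0:ℝ)}ᶜ) (nhds ((2:ℝ)^(2*m) * (1 * P 0))) :=
    (hts1.mul htsP).const_mul _
  have t1 : Filter.Tendsto (fun x : ℝ => (2:ℝ)^(2*m) * (Real.sin x / x * P x))
      (nhdsWithin 0 {(0:ℝ)}ᶜ) (nhds (2*(m:ℝ)+1)) := by
    apply hts.congr
    intro y
    rw [sin_split m y]
    simp only [hP]
    ring
  have huniq := tendsto_nhds_unique t1 t2
  have hP0 : P 0 = ∏ j ∈ Finset.Icc 1 m, Real.sin (j * π / (2*(m:ℝ)+1)) ^ 2 := by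
    simp [hP]
  rw [← hP0]
  linarith [huniq]

/-- For every nonnegative integer `m` and real `x`,
`sin((2m+1)x) = (2m+1) sin x ∏_{j=1}^{m} (1 − sin²x / sin²(jπ/(2m+1)))`. -/
theorem sin_odd_mul_eq_prod (m : ℕ) (x : ℝ) :
    Real.sin ((2 * m + 1) * x) =
      (2 * m + 1) * Real.sin x *
        ∏ j ∈ Finset.Icc 1 m,
          (1 - Real.sin x ^ 2 / Real.sin (j * π / (2 * m + 1)) ^ 2) := by
  have hn0 : (0:ℝ) < 2*(m:ℝ)+1 := by positivity
  have hs0 : ∀ j ∈ Finset.Icc 1 m, Real.sin ((j:ℝ) * π / (2*(m:ℝ)+1)) ≠ 0 := by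
    intro j hj
    obtain ⟨h1, h2⟩ := Finset.mem_Icc.mp hj
    have hj0 : (0:ℝ) < j := by exact_mod_cast h1
    have hjlt : (j:ℝ) < 2*(m:ℝ)+1 := by
      have : j < 2*m+1 := by omega
      exact_mod_cast this
    apply ne_of_gt
    apply Real.sin_pos_of_pos_of_lt_pi
    · positivity
    · rw [div_lt_iff₀ hn0]
      nlinarith [Real.pi_pos]
  set Q := ∏ j ∈ Finset.Icc 1 m, Real.sin ((j:ℝ)*π/(2*(m:ℝ)+1))^2 with hQ
  set A := ∏ j ∈ Finset.Icc 1 m,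
    (Real.sin ((j:ℝ)*π/(2*(m:ℝ)+1))^2 - Real.sin x^2) with hA
  have hQ0 : Q ≠ 0 := Finset.prod_ne_zero_iff.mpr (fun j hj => pow_ne_zero 2 (hs0 j hj))
  have hconst := const_eq m
  have hprod : ∏ j ∈ Finset.Icc 1 m,
      (1 - Real.sin x^2 / Real.sin ((j:ℝ)*π/(2*(m:ℝ)+1))^2) = A / Q := by
    rw [hQ, hA, ← Finset.prod_div_distrib]
    apply Finset.prod_congr rfl
    intro j hj
    field_simp [hs0 j hj]
  rw [sin_split m x, hprod, ← hA]
  field_simp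
  linear_combination (Real.sin x * A) * hconst
end

section
/- For every positive integer n, the integrals I_n = ∫₀^{π/2} cos^{2n}x dx and J_n = ∫₀^{π/2} x² cos^{2n}x dx satisfy I_n = n(2n−1) J_{n−1} − 2n² J_n. -/
open Real

/-- For every positive integer `n`, with `Iₙ = ∫₀^{π/2} cos^{2n} x dx` and
`Jₙ = ∫₀^{π/2} x² cos^{2n} x dx`, we have `Iₙ = n(2n−1) J_{n−1} − 2n² Jₙ`. -/
theorem matsuoka_recursion (n : ℕ) (hn : 0 < n) :
    (∫ x in (0:ℝ)..(π / 2), Real.cos x ^ (2 * n)) =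
      (n : ℝ) * (2 * n - 1) *
          (∫ x in (0:ℝ)..(π / 2), x ^ 2 * Real.cos x ^ (2 * (n - 1))) -
        2 * (n : ℝ) ^ 2 * ∫ x in (0:ℝ)..(π / 2), x ^ 2 * Real.cos x ^ (2 * n) := by
  obtain ⟨m, rfl⟩ : ∃ m, n = m + 1 := ⟨n - 1, (Nat.succ_pred_eq_of_pos hn).symm⟩
  have hsub : (m + 1) - 1 = m := rfl
  rw [hsub]
  set F : ℝ → ℝ := fun x =>
    x * Real.cos x ^ (2 * m + 2) +
      ((m : ℝ) + 1) * (x ^ 2 * Real.sin x * Real.cos x ^ (2 * m + 1)) with hF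
  set g : ℝ → ℝ := fun x =>
    Real.cos x ^ (2 * (m + 1)) +
      (2 * ((m : ℝ) + 1) ^ 2) * (x ^ 2 * Real.cos x ^ (2 * (m + 1))) -
      (((m : ℝ) + 1) * (2 * ((m : ℝ) + 1) - 1)) * (x ^ 2 * Real.cos x ^ (2 * m)) with hg
  have hderiv : ∀ x ∈ Set.uIcc (0:ℝ) (π / 2), HasDerivAt F (g x) x := by
    intro x _
    have hc : HasDerivAt Real.cos (-Real.sin x) x := Real.hasDerivAt_cos x
    have hs : HasDerivAt Real.sin (Real.cos x) x := Real.hasDerivAt_sin x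
    have h1 : HasDerivAt (fun x => x * Real.cos x ^ (2 * m + 2))
        (1 * Real.cos x ^ (2 * m + 2) +
          x * ((2 * m + 2 : ℕ) * Real.cos x ^ (2 * m + 1) * (-Real.sin x))) x :=
      (hasDerivAt_id x).mul (hc.pow _)
    have h2 : HasDerivAt (fun x => x ^ 2 * Real.sin x * Real.cos x ^ (2 * m + 1))
        ((((2:ℕ) * x ^ 1) * Real.sin x + x ^ 2 * Real.cos x) * Real.cos x ^ (2 * m + 1) +
          x ^ 2 * Real.sin x * ((2 * m + 1 : ℕ) * Real.cos x ^ (2 * m) * (-Real.sin x))) x :=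
      (((hasDerivAt_pow 2 x).mul hs)).mul (hc.pow _)
    have h := h1.add (h2.const_mul ((m : ℝ) + 1))
    convert h using 1
    case e'_4 => rfl
    case e'_5 => rfl
    case e'_8 => rfl
    have hsin : Real.sin x ^ 2 = 1 - Real.cos x ^ 2 := Real.sin_sq x
    simp only [hg]
    push_cast
    have hpow1 : Real.cos x ^ (2 * (m + 1)) = Real.cos x ^ (2 * m) * Real.cos x ^ 2 := by
      rw [show 2 * (m + 1) = 2 * m + 2 by ring, pow_add]
    rw [show (2 : ℝ) * (m + 1) - 1 = 2 * m + 1 by ring]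
    rw [hpow1, show 2 * m + 2 = 2 * m + 2 from rfl]
    have e1 : Real.cos x ^ (2 * m + 2) = Real.cos x ^ (2 * m) * Real.cos x ^ 2 := by
      rw [pow_add]
    have e2 : Real.cos x ^ (2 * m + 1) = Real.cos x ^ (2 * m) * Real.cos x := by
      rw [pow_add, pow_one]
    rw [e1, e2]
    linear_combination (((m:ℝ)+1)*(2*(m:ℝ)+1)*x^2*Real.cos x^(2*m)) * hsin
  have hgc : Continuous g := by
    simp only [hg]
    fun_prop
  have hint : ∫ x in (0:ℝ)..(π / 2), g x = F (π / 2) - F 0 :=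
    intervalIntegral.integral_eq_sub_of_hasDerivAt hderiv
      (hgc.intervalIntegrable _ _)
  have hF0 : F 0 = 0 := by simp [hF]
  have hFpi : F (π / 2) = 0 := by
    simp [hF, Real.cos_pi_div_two, zero_pow]
  rw [hF0, hFpi, sub_zero] at hint
  have hi1 : IntervalIntegrable (fun x => Real.cos x ^ (2 * (m + 1))) MeasureTheory.volume 0 (π/2) := by
    apply Continuous.intervalIntegrable; fun_prop
  have hi2 : IntervalIntegrable (fun x => x ^ 2 * Real.cos x ^ (2 * (m + 1))) MeasureTheory.volume 0 (π/2) := by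
    apply Continuous.intervalIntegrable; fun_prop
  have hi3 : IntervalIntegrable (fun x => x ^ 2 * Real.cos x ^ (2 * m)) MeasureTheory.volume 0 (π/2) := by
    apply Continuous.intervalIntegrable; fun_prop
  have hsplit : ∫ x in (0:ℝ)..(π / 2), g x =
      (∫ x in (0:ℝ)..(π / 2), Real.cos x ^ (2 * (m + 1))) +
        (2 * ((m : ℝ) + 1) ^ 2) * (∫ x in (0:ℝ)..(π / 2), x ^ 2 * Real.cos x ^ (2 * (m + 1))) -
        (((m : ℝ) + 1) * (2 * ((m : ℝ) + 1) - 1)) *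
          (∫ x in (0:ℝ)..(π / 2), x ^ 2 * Real.cos x ^ (2 * m)) := by
    simp only [hg]
    rw [intervalIntegral.integral_sub (hi1.add (hi2.const_mul _)) (hi3.const_mul _),
      intervalIntegral.integral_add hi1 (hi2.const_mul _),
      intervalIntegral.integral_const_mul, intervalIntegral.integral_const_mul]
  rw [hsplit] at hint
  push_cast
  linarith [hint]
end

section
/- For every nonnegative integer N, the integrals I_N = ∫₀^{π/2} cos^{2N}x dx and J_N = ∫₀^{π/2} x² cos^{2N}x dx satisfy J_N ≤ (π²/4)(I_N − I_{N+1}) = (π²/8) · I_N/(N+1). -/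
open Real

/-- For every nonnegative integer `N`, with `Iₙ = ∫₀^{π/2} cos^{2n} x dx` and
`Jₙ = ∫₀^{π/2} x² cos^{2n} x dx`, we have
`J_N ≤ (π²/4)(I_N − I_{N+1}) = (π²/8) I_N / (N+1)`. -/
theorem matsuoka_bound (N : ℕ) :
    (∫ x in (0:ℝ)..(π / 2), x ^ 2 * Real.cos x ^ (2 * N)) ≤
        π ^ 2 / 4 *
          ((∫ x in (0:ℝ)..(π / 2), Real.cos x ^ (2 * N)) -
            ∫ x in (0:ℝ)..(π / 2), Real.cos x ^ (2 * (N + 1))) ∧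
      π ^ 2 / 4 *
          ((∫ x in (0:ℝ)..(π / 2), Real.cos x ^ (2 * N)) -
            ∫ x in (0:ℝ)..(π / 2), Real.cos x ^ (2 * (N + 1))) =
        π ^ 2 / 8 * (∫ x in (0:ℝ)..(π / 2), Real.cos x ^ (2 * N)) / (N + 1) := by
  have h2 : (2 * (N + 1)) = 2 * N + 2 := by ring
  have hrec : (∫ x in (0:ℝ)..(π / 2), Real.cos x ^ (2 * (N + 1))) =
      (2 * N + 1) / (2 * N + 2) * ∫ x in (0:ℝ)..(π / 2), Real.cos x ^ (2 * N) := by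
    rw [h2, integral_cos_pow]
    simp
  constructor
  · have hle : ∀ x ∈ Set.Icc (0:ℝ) (π/2),
        x ^ 2 * Real.cos x ^ (2 * N) ≤
          π ^ 2 / 4 * (Real.cos x ^ (2 * N) - Real.cos x ^ (2 * (N + 1))) := by
      intro x hx
      have hs := Real.mul_le_sin hx.1 hx.2
      have hs0 : 0 ≤ Real.sin x := Real.sin_nonneg_of_nonneg_of_le_pi hx.1
        (hx.2.trans (by linarith [pi_pos]))
      have hx2 : x ^ 2 ≤ π ^ 2 / 4 * Real.sin x ^ 2 := by
        have hπ : (0:ℝ) < π := pi_pos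
        have hxs : x ≤ π / 2 * Real.sin x := by
          have := mul_le_mul_of_nonneg_left hs (le_of_lt (by positivity : (0:ℝ) < π / 2))
          calc x = π / 2 * (2 / π * x) := by field_simp
            _ ≤ π / 2 * Real.sin x := this
        calc x ^ 2 ≤ (π / 2 * Real.sin x) ^ 2 := pow_le_pow_left₀ hx.1 hxs 2
          _ = π ^ 2 / 4 * Real.sin x ^ 2 := by ring
      have hkey : Real.cos x ^ (2 * N) - Real.cos x ^ (2 * (N + 1)) =
          Real.sin x ^ 2 * Real.cos x ^ (2 * N) := by
        rw [h2, pow_add, Real.sin_sq]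
        ring
      rw [hkey]
      have hc : (0:ℝ) ≤ Real.cos x ^ (2 * N) := by rw [pow_mul]; positivity
      calc x ^ 2 * Real.cos x ^ (2 * N)
          ≤ π ^ 2 / 4 * Real.sin x ^ 2 * Real.cos x ^ (2 * N) := by
            apply mul_le_mul_of_nonneg_right hx2 hc
        _ = π ^ 2 / 4 * (Real.sin x ^ 2 * Real.cos x ^ (2 * N)) := by ring
    have := intervalIntegral.integral_mono_on (μ := MeasureTheory.volume) (by linarith [pi_pos] : (0:ℝ) ≤ π/2)
      (by apply Continuous.intervalIntegrable; fun_prop)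
      (by apply Continuous.intervalIntegrable; fun_prop) hle
    refine this.trans_eq ?_
    rw [intervalIntegral.integral_const_mul, intervalIntegral.integral_sub
      ((by apply Continuous.intervalIntegrable; fun_prop))
      ((by apply Continuous.intervalIntegrable; fun_prop))]
  · rw [hrec]
    have : (2 * (N:ℝ) + 2) ≠ 0 := by positivity
    field_simp
    ring
end

section
/- For every nonnegative integer n, (1/4ⁿ) ∑_{k=0}^{2ⁿ−1} 1/sin²((2k+1)π/2^{n+1}) = 1. -/
open Real

lemma half_angle_aux (θ : ℝ) (h1 : 0 < θ) (h2 : θ < π / 2) :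
    1 / Real.sin θ ^ 2 + 1 / Real.cos θ ^ 2 = 4 / Real.sin (2 * θ) ^ 2 := by
  have hs : 0 < Real.sin θ := Real.sin_pos_of_pos_of_lt_pi h1 (by linarith [Real.pi_pos])
  have hc : 0 < Real.cos θ := Real.cos_pos_of_mem_Ioo ⟨by linarith, h2⟩
  rw [Real.sin_two_mul]
  have hpyth := Real.sin_sq_add_cos_sq θ
  field_simp
  nlinarith [hpyth, sq_nonneg (Real.sin θ), sq_nonneg (Real.cos θ)]

lemma hof_term (n k : ℕ) (hk : k < 2 ^ n) :
    1 / Real.sin ((2 * k + 1) * π / 2 ^ (n + 2)) ^ 2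
      + 1 / Real.sin ((2 * ((2:ℝ) ^ n + k) + 1) * π / 2 ^ (n + 2)) ^ 2
    = 4 * (1 / Real.sin ((2 * k + 1) * π / 2 ^ (n + 1)) ^ 2) := by
  have hk' : (k : ℝ) + 1 ≤ 2 ^ n := by exact_mod_cast hk
  set θ : ℝ := (2 * k + 1) * π / 2 ^ (n + 2) with hθ
  have hpos : 0 < θ := by rw [hθ]; positivity
  have hlt : θ < π / 2 := by
    rw [hθ, div_lt_iff₀ (by positivity : (0:ℝ) < 2 ^ (n + 2))]
    have h4 : (2:ℝ) ^ (n + 2) = 4 * 2 ^ n := by ring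
    rw [h4]
    nlinarith [Real.pi_pos,
      mul_pos (show (0:ℝ) < 2 * 2 ^ n - (2 * k + 1) by linarith) Real.pi_pos]
  have e2 : (2 * ((2:ℝ) ^ n + k) + 1) * π / 2 ^ (n + 2) = π / 2 + θ := by
    rw [hθ]; field_simp; ring
  have e3 : (2 * (k:ℝ) + 1) * π / 2 ^ (n + 1) = 2 * θ := by
    rw [hθ]; field_simp; ring
  have e4 : Real.sin (π / 2 + θ) = Real.cos θ := by rw [Real.sin_add]; simp
  rw [e2, e3, e4, half_angle_aux θ hpos hlt]
  ring

lemma hof_sum (n : ℕ) :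
    ∑ k ∈ Finset.range (2 ^ n),
      1 / Real.sin ((2 * k + 1) * π / 2 ^ (n + 1)) ^ 2 = 4 ^ n := by
  induction n with
  | zero => simp
  | succ n ih =>
    have h2 : (2 : ℕ) ^ (n + 1) = 2 ^ n + 2 ^ n := by ring
    rw [h2, Finset.sum_range_add, ← Finset.sum_add_distrib]
    have h4 : (4:ℝ) ^ (n + 1) = 4 * 4 ^ n := by ring
    rw [h4, ← ih, Finset.mul_sum]
    apply Finset.sum_congr rfl
    intro k hk
    rw [Finset.mem_range] at hk
    have := hof_term n k hk
    push_cast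
    convert this using 3

/-- For every nonnegative integer `n`,
`(1/4ⁿ) ∑_{k=0}^{2ⁿ−1} 1 / sin²((2k+1)π/2^{n+1}) = 1`. -/
theorem hofbauer_identity (n : ℕ) :
    (1 / 4 ^ n) *
        ∑ k ∈ Finset.range (2 ^ n),
          1 / Real.sin ((2 * k + 1) * π / 2 ^ (n + 1)) ^ 2 = 1 := by
  rw [hof_sum]
  field_simp
end

section
/- The double integral ∫_{−1}^{1} ∫_{−1}^{1} 1/(1 + 2xy + y²) dy dx over the square [−1,1] × [−1,1] equals π²/2. -/
open Real MeasureTheory intervalIntegral Set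

lemma rpow_neg_half_eq (t : ℝ) (ht : 0 ≤ t) : t ^ (-(1/2) : ℝ) = (√t)⁻¹ := by
  rw [Real.rpow_neg ht, Real.sqrt_eq_rpow]

lemma integrable_one_div_sqrt :
    IntervalIntegrable (fun x : ℝ => 1 / √(1 - x ^ 2)) volume (-1) 1 := by
  have h1 : IntervalIntegrable (fun x : ℝ => (1 - x) ^ (-(1/2) : ℝ)) volume (-1) 1 := by
    have := (intervalIntegrable_rpow' (a := 0) (b := 2) (r := (-(1/2) : ℝ))
      (by norm_num)).comp_sub_left 1
    norm_num at this
    exact this.symm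
  have h2 : IntervalIntegrable (fun x : ℝ => (1 + x) ^ (-(1/2) : ℝ)) volume (-1) 1 := by
    have := (intervalIntegrable_rpow' (a := 0) (b := 2) (r := (-(1/2) : ℝ))
      (by norm_num)).comp_add_left 1
    norm_num at this
    exact this
  apply (h1.add h2).mono_fun
  · exact (measurable_const.div
      ((by continuity : Continuous fun x : ℝ => √(1 - x ^ 2)).measurable)).aestronglyMeasurable
  · filter_upwards [ae_restrict_mem measurableSet_uIoc] with x hx
    have hx' : x ∈ Ioc (-1:ℝ) 1 := by
      simpa [Set.uIoc_of_le (by norm_num : (-1:ℝ) ≤ 1)] using hx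
    have hx1 : (0:ℝ) ≤ 1 - x := by linarith [hx'.2]
    have hx2 : (0:ℝ) < 1 + x := by linarith [hx'.1]
    have e1 : (1 - x) ^ (-(1/2):ℝ) = (√(1-x))⁻¹ := rpow_neg_half_eq _ hx1
    have e2 : (1 + x) ^ (-(1/2):ℝ) = (√(1+x))⁻¹ := rpow_neg_half_eq _ hx2.le
    have e3 : 1 / √(1 - x ^ 2) = (√(1-x))⁻¹ * (√(1+x))⁻¹ := by
      rw [show (1:ℝ) - x ^ 2 = (1-x)*(1+x) by ring, Real.sqrt_mul hx1, one_div, mul_inv]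
    rw [e3, Real.norm_eq_abs, Real.norm_eq_abs, e1, e2,
      abs_of_nonneg (by positivity), abs_of_nonneg (by positivity)]
    rcases le_or_gt x 0 with h | h
    · have hb : (√(1-x))⁻¹ ≤ 1 := by
        rw [inv_le_one_iff₀]; right
        rw [show (1:ℝ) = √1 by simp]
        exact Real.sqrt_le_sqrt (by simp; linarith)
      calc (√(1-x))⁻¹ * (√(1+x))⁻¹ ≤ 1 * (√(1+x))⁻¹ :=
            mul_le_mul_of_nonneg_right hb (by positivity)
        _ = (√(1+x))⁻¹ := one_mul _
        _ ≤ (√(1-x))⁻¹ + (√(1+x))⁻¹ := le_add_of_nonneg_left (by positivity)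
    · have hb : (√(1+x))⁻¹ ≤ 1 := by
        rw [inv_le_one_iff₀]; right
        rw [show (1:ℝ) = √1 by simp]
        exact Real.sqrt_le_sqrt (by simp; linarith)
      calc (√(1-x))⁻¹ * (√(1+x))⁻¹ ≤ (√(1-x))⁻¹ * 1 :=
            mul_le_mul_of_nonneg_left hb (by positivity)
        _ = (√(1-x))⁻¹ := mul_one _
        _ ≤ (√(1-x))⁻¹ + (√(1+x))⁻¹ := le_add_of_nonneg_right (by positivity)

lemma integral_one_div_sqrt :
    (∫ x in (-1:ℝ)..1, 1 / √(1 - x ^ 2)) = π := by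
  rw [integral_eq_sub_of_hasDerivAt_of_le (by norm_num)
      (Real.continuous_arcsin.continuousOn)
      (fun x hx => Real.hasDerivAt_arcsin (ne_of_gt hx.1) (ne_of_lt hx.2))
      integrable_one_div_sqrt]
  rw [Real.arcsin_one, Real.arcsin_neg, Real.arcsin_one]
  ring

lemma inner_integral (x : ℝ) (hx : x ∈ Ioo (-1:ℝ) 1) :
    (∫ y in (-1:ℝ)..1, 1 / (1 + 2 * x * y + y ^ 2)) = π / 2 * (1 / √(1 - x ^ 2)) := by
  set c := √(1 - x ^ 2) with hc
  have hx2 : (0:ℝ) < 1 - x ^ 2 := by nlinarith [hx.1, hx.2]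
  have hcpos : 0 < c := Real.sqrt_pos.mpr hx2
  have hcsq : c ^ 2 = 1 - x ^ 2 := Real.sq_sqrt hx2.le
  have hpos : ∀ y : ℝ, 0 < 1 + 2 * x * y + y ^ 2 := by
    intro y
    nlinarith [sq_nonneg (y + x), hx2]
  have hderiv : ∀ y ∈ Set.uIcc (-1:ℝ) 1,
      HasDerivAt (fun y => (1/c) * Real.arctan ((y + x)/c))
        (1 / (1 + 2 * x * y + y ^ 2)) y := by
    intro y _
    have hu : HasDerivAt (fun y : ℝ => (y + x)/c) (1/c) y :=
      ((hasDerivAt_id y).add_const x).div_const c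
    have h1 := (Real.hasDerivAt_arctan ((y + x)/c)).comp y hu
    have h2 := h1.const_mul (1/c)
    refine h2.congr_deriv (Eq.symm ?_)
    have h3 : 1 + ((y + x)/c) ^ 2 = (1 + 2*x*y + y^2) / c ^ 2 := by
      field_simp
      nlinarith [hcsq]
    rw [h3]
    field_simp [hcpos.ne', (hpos y).ne']
  have hint : IntervalIntegrable (fun y => 1 / (1 + 2 * x * y + y ^ 2)) volume (-1) 1 := by
    apply Continuous.intervalIntegrable
    exact continuous_const.div (by continuity) (fun y => ne_of_gt (hpos y))
  rw [integral_eq_sub_of_hasDerivAt hderiv hint]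
  have ha : (0:ℝ) < (1 + x)/c := div_pos (by linarith [hx.1]) hcpos
  have hinv : ((1 + x)/c)⁻¹ = (1 - x)/c := by
    rw [inv_div, div_eq_div_iff (by linarith [hx.1]) (ne_of_gt hcpos)]
    nlinarith [hcsq]
  have harc : Real.arctan ((1 - x)/c) = π/2 - Real.arctan ((1 + x)/c) := by
    rw [← hinv]; exact Real.arctan_inv_of_pos ha
  have hneg : ((-1:ℝ) + x)/c = -((1 - x)/c) := by ring
  rw [hneg, Real.arctan_neg, harc]
  field_simp
  ring

/-- The double integral `∫_{−1}^{1} ∫_{−1}^{1} 1/(1 + 2xy + y²)` over the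
square `[−1,1] × [−1,1]` equals `π²/2`. -/
theorem double_integral_ivan :
    (∫ x in (-1:ℝ)..1, ∫ y in (-1:ℝ)..1, 1 / (1 + 2 * x * y + y ^ 2)) =
      π ^ 2 / 2 := by
  have hcongr : (∫ x in (-1:ℝ)..1, ∫ y in (-1:ℝ)..1, 1 / (1 + 2 * x * y + y ^ 2)) =
      ∫ x in (-1:ℝ)..1, π / 2 * (1 / √(1 - x ^ 2)) := by
    apply intervalIntegral.integral_congr_ae
    have h1 : ∀ᵐ x : ℝ, x ≠ (1:ℝ) := by
      rw [MeasureTheory.ae_iff]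
      simp
    filter_upwards [h1] with x hx1 hx
    rw [Set.uIoc_of_le (by norm_num : (-1:ℝ) ≤ 1)] at hx
    exact inner_integral x ⟨hx.1, lt_of_le_of_ne hx.2 hx1⟩
  rw [hcongr, intervalIntegral.integral_const_mul, integral_one_div_sqrt]
  ring
end
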